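/- If J − J* is injective, then every ℝ-linear map ω : V → ℂ can be written uniquely as ω = ω' + ω'' with ω' J-linear and ω'' J*-linear. Equivalently, the ℝ-linear map from (V →ₗ[ℝ] ℝ) × (V →ₗ[ℝ] ℝ) to the space of ℝ-linear maps V → ℂ sending (ω₁, ω₂) to the map v ↦ (ω₁(v) + ω₂(v)) − i·(ω₁(Jv) + ω₂(J*v)) is bijective. -/
import Mathlib

open Complex

private noncomputable def phiAux {V : Type*} [AddCommGroup V] [Module ℝ V]
    (J : V →ₗ[ℝ] V) : (V →ₗ[ℝ] ℝ) →ₗ[ℝ] (V →ₗ[ℝ] ℂ) where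
  toFun ω := Complex.ofRealAm.toLinearMap ∘ₗ ω - I • (Complex.ofRealAm.toLinearMap ∘ₗ (ω ∘ₗ J))
  map_add' ω η := by ext v; simp; ring
  map_smul' c ω := by ext v; simp; ring

private theorem phiAux_apply {V : Type*} [AddCommGroup V] [Module ℝ V]
    (J : V →ₗ[ℝ] V) (ω : V →ₗ[ℝ] ℝ) (v : V) :
    phiAux J ω v = (ω v : ℂ) - I * (ω (J v) : ℂ) := by
  simp [phiAux]

private theorem phiAux_lin {V : Type*} [AddCommGroup V] [Module ℝ V]
    (J : V →ₗ[ℝ] V) (hJ : J ∘ₗ J = -LinearMap.id) (ω : V →ₗ[ℝ] ℝ) (v : V) :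
    phiAux J ω (J v) = I * phiAux J ω v := by
  have h2 : J (J v) = -v := by
    have := LinearMap.ext_iff.mp hJ v
    simpa using this
  rw [phiAux_apply, phiAux_apply, h2, map_neg]
  push_cast
  ring_nf
  rw [Complex.I_sq]
  ring

private theorem phiAux_re {V : Type*} [AddCommGroup V] [Module ℝ V]
    (J : V →ₗ[ℝ] V) (ξ : V →ₗ[ℝ] ℂ) (hξ : ∀ v, ξ (J v) = I * ξ v) :
    phiAux J (Complex.reLm.comp ξ) = ξ := by
  ext v
  rw [phiAux_apply]
  apply Complex.ext
  · simp
  · have := congrArg Complex.re (hξ v)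
    simp at this
    simp [this]

theorem linear_functional_decomposition
    (V : Type*) [AddCommGroup V] [Module ℝ V] [FiniteDimensional ℝ V]
    (J Jstar : V →ₗ[ℝ] V)
    (hJ : J ∘ₗ J = -LinearMap.id) (hJstar : Jstar ∘ₗ Jstar = -LinearMap.id)
    (hinj : Function.Injective (J - Jstar)) :
    (∀ ω : V →ₗ[ℝ] ℂ, ∃! p : (V →ₗ[ℝ] ℂ) × (V →ₗ[ℝ] ℂ),
        ω = p.1 + p.2 ∧ (∀ v, p.1 (J v) = I * p.1 v) ∧ (∀ v, p.2 (Jstar v) = I * p.2 v))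
    ∧
    Function.Bijective (fun p : (V →ₗ[ℝ] ℝ) × (V →ₗ[ℝ] ℝ) =>
      (Complex.ofRealAm.toLinearMap ∘ₗ (p.1 + p.2)
        - I • (Complex.ofRealAm.toLinearMap ∘ₗ (p.1 ∘ₗ J + p.2 ∘ₗ Jstar)) : V →ₗ[ℝ] ℂ)) := by
  -- the linear map version
  set Φ : ((V →ₗ[ℝ] ℝ) × (V →ₗ[ℝ] ℝ)) →ₗ[ℝ] (V →ₗ[ℝ] ℂ) :=
    (phiAux J).comp (LinearMap.fst ℝ _ _) + (phiAux Jstar).comp (LinearMap.snd ℝ _ _) with hΦ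
  have hfun : (fun p : (V →ₗ[ℝ] ℝ) × (V →ₗ[ℝ] ℝ) =>
      (Complex.ofRealAm.toLinearMap ∘ₗ (p.1 + p.2)
        - I • (Complex.ofRealAm.toLinearMap ∘ₗ (p.1 ∘ₗ J + p.2 ∘ₗ Jstar)) : V →ₗ[ℝ] ℂ)) = Φ := by
    funext p
    ext v
    simp [hΦ, phiAux_apply]
    ring
  -- surjectivity of J - Jstar
  have hsurj : Function.Surjective (J - Jstar) :=
    (LinearMap.injective_iff_surjective).mp hinj
  -- injectivity of Φ
  have hΦinj : Function.Injective Φ := by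
    rw [← LinearMap.ker_eq_bot, LinearMap.ker_eq_bot']
    rintro ⟨ω₁, ω₂⟩ h0
    have h0' : ∀ v : V, (ω₁ v + ω₂ v : ℂ) - I * ((ω₁ (J v) + ω₂ (Jstar v) : ℝ) : ℂ) = 0 := by
      intro v
      have := congrArg (fun f : V →ₗ[ℝ] ℂ => f v) h0
      simp [hΦ, phiAux_apply] at this
      push_cast
      linear_combination this
    have hre : ∀ v, ω₁ v + ω₂ v = 0 := by
      intro v
      have := congrArg Complex.re (h0' v)
      simpa using this
    have him : ∀ v, ω₁ (J v) + ω₂ (Jstar v) = 0 := by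
      intro v
      have := congrArg Complex.im (h0' v)
      simp at this
      linarith
    have hω2 : ω₂ = -ω₁ := by ext v; have := hre v; simp; linarith
    have h1 : ω₁ = 0 := by
      ext w
      obtain ⟨v, rfl⟩ := hsurj w
      have := him v
      rw [hω2] at this
      simp at this ⊢
      linarith [this]
    subst hω2 h1
    simp
  -- bijectivity of Φ via dimension count
  have hΦbij : Function.Bijective Φ := by
    refine ⟨hΦinj, ?_⟩
    rw [← LinearMap.injective_iff_surjective_of_finrank_eq_finrank ?_]
    · exact hΦinj
    · simp [Module.finrank_prod, Module.finrank_linearMap, Complex.finrank_real_complex]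
      ring
  constructor
  · -- unique decomposition
    intro ω
    obtain ⟨p, hp⟩ := hΦbij.2 ω
    refine ⟨(phiAux J p.1, phiAux Jstar p.2), ⟨?_, phiAux_lin J hJ p.1, phiAux_lin Jstar hJstar p.2⟩, ?_⟩
    · rw [← hp]; ext v; simp [hΦ]
    · rintro ⟨η₁, η₂⟩ ⟨hsum, h1, h2⟩
      have e1 : phiAux J (Complex.reLm.comp η₁) = η₁ := phiAux_re J η₁ h1
      have e2 : phiAux Jstar (Complex.reLm.comp η₂) = η₂ := phiAux_re Jstar η₂ h2
      have : Φ (Complex.reLm.comp η₁, Complex.reLm.comp η₂) = Φ p := by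
        rw [hp, hsum]
        simp only [hΦ, LinearMap.add_apply, LinearMap.comp_apply, LinearMap.fst_apply,
          LinearMap.snd_apply, e1, e2]
      have hpe := hΦinj this
      have hq1 : Complex.reLm.comp η₁ = p.1 := congrArg Prod.fst hpe
      have hq2 : Complex.reLm.comp η₂ = p.2 := congrArg Prod.snd hpe
      rw [← e1, ← e2, hq1, hq2]
  · rw [hfun]; exact hΦbij
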